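/- For all 3×3 Hermitian complex matrices A and C and every 3×3 complex matrix B, the quantity Φ := 4(|A|² + |C|² + 2|B|²) - □' - (1/12)(tr A + tr C)² is nonnegative, where □' = -(1/2)⟨A+C, A+C⟩ - (1/2)(⟨A,A⟩ + ⟨C,C⟩ + ⟨B,B*⟩ + ⟨B*,B⟩) + (tr A)² + (tr C)² + 2|tr B|² + |A+C|², with ⟨X,Y⟩ := ∑_{i,j=1}^3 X_{ij} Y_{(4-i)(4-j)}. -/

import Mathlib

set_option maxHeartbeats 2000000


open Matrix
open scoped ComplexOrder

/-- The anti-diagonal pairing `⟨X, Y⟩ = ∑ X_{ij} Y_{(4-i)(4-j)}` (1-based;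
`Fin.rev` in 0-based indexing) on `3×3` complex matrices. -/
noncomputable def apair (X Y : Matrix (Fin 3) (Fin 3) ℂ) : ℂ :=
  ∑ i, ∑ j, X i j * Y i.rev j.rev

/-- The squared Hilbert–Schmidt norm `|X|² = ∑ |X_{ij}|²`. -/
noncomputable def hsNormSq (X : Matrix (Fin 3) (Fin 3) ℂ) : ℝ :=
  ∑ i, ∑ j, ‖X i j‖ ^ 2

/-- For `3×3` Hermitian `A, C` and any `3×3` complex `B`, the quantity
`Φ = 4(|A|² + |C|² + 2|B|²) - □' - (1/12)(tr A + tr C)²` is nonnegative, where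
`□' = -(1/2)⟨A+C, A+C⟩ - (1/2)(⟨A,A⟩ + ⟨C,C⟩ + ⟨B,B*⟩ + ⟨B*,B⟩)
      + (tr A)² + (tr C)² + 2|tr B|² + |A+C|²`. -/
theorem stmt14 (A C B : Matrix (Fin 3) (Fin 3) ℂ)
    (hA : A.IsHermitian) (hC : C.IsHermitian) :
    0 ≤ 4 * ((hsNormSq A + hsNormSq C + 2 * hsNormSq B : ℝ) : ℂ)
      - (-(1/2) * apair (A + C) (A + C)
          - (1/2) * (apair A A + apair C C + apair B Bᴴ + apair Bᴴ B)
          + A.trace ^ 2 + C.trace ^ 2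
          + 2 * ((‖B.trace‖ ^ 2 : ℝ) : ℂ)
          + ((hsNormSq (A + C) : ℝ) : ℂ))
      - (1/12) * (A.trace + C.trace) ^ 2 := by
  have hre : ∀ i j, (A i j).re = (A j i).re := fun i j => by
    rw [← hA.apply i j]; simp
  have him : ∀ i j, (A i j).im = -(A j i).im := fun i j => by
    rw [← hA.apply i j]; simp
  have gre : ∀ i j, (C i j).re = (C j i).re := fun i j => by
    rw [← hC.apply i j]; simp
  have gim : ∀ i j, (C i j).im = -(C j i).im := fun i j => by
    rw [← hC.apply i j]; simp
  have hA00 : (A 0 0).im = 0 := by have := him 0 0; linarith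
  have hA11 : (A 1 1).im = 0 := by have := him 1 1; linarith
  have hA22 : (A 2 2).im = 0 := by have := him 2 2; linarith
  have hC00 : (C 0 0).im = 0 := by have := gim 0 0; linarith
  have hC11 : (C 1 1).im = 0 := by have := gim 1 1; linarith
  have hC22 : (C 2 2).im = 0 := by have := gim 2 2; linarith
  rw [Complex.le_def]
  constructor <;> simp only [apair, hsNormSq, Matrix.trace, Matrix.diag, Fin.sum_univ_three,
      Matrix.add_apply, Matrix.conjTranspose_apply, Complex.star_def,
      Complex.conj_re, Complex.conj_im,
      show (0 : Fin 3).rev = 2 from rfl, show (1 : Fin 3).rev = 1 from rfl,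
      show (2 : Fin 3).rev = 0 from rfl,
      show ((1 : ℂ)/2) = ((1/2 : ℝ) : ℂ) by norm_num,
      show ((1 : ℂ)/12) = ((1/12 : ℝ) : ℂ) by norm_num,
      Complex.sq_norm, show ∀ z : ℂ, ‖z‖ * ‖z‖ = Complex.normSq z from fun z => ((Complex.normSq_eq_norm_sq z).trans (pow_two _)).symm, Complex.normSq_apply, pow_two,
      Complex.add_re, Complex.add_im, Complex.sub_re, Complex.sub_im,
      Complex.mul_re, Complex.mul_im, Complex.neg_re, Complex.neg_im,
      Complex.ofReal_re, Complex.ofReal_im, Complex.zero_re, Complex.zero_im,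
      Complex.re_ofNat, Complex.im_ofNat, Complex.one_re, Complex.one_im,
      hre 1 0, hre 2 0, hre 2 1, him 1 0, him 2 0, him 2 1,
      gre 1 0, gre 2 0, gre 2 1, gim 1 0, gim 2 0, gim 2 1,
      hA00, hA11, hA22, hC00, hC11, hC22]
  · linarith [sq_nonneg ((23:ℝ) * (A 0 0).re + (-13:ℝ) * (A 1 1).re + (-1:ℝ) * (A 2 2).re + (-13:ℝ) * (C 0 0).re + (-1:ℝ) * (C 1 1).re + (5:ℝ) * (C 2 2).re),
      sq_nonneg ((106:ℝ) * (A 1 1).re + (-52:ℝ) * (A 2 2).re + (-32:ℝ) * (C 0 0).re + (-29:ℝ) * (C 1 1).re + (7:ℝ) * (C 2 2).re),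
      sq_nonneg ((48:ℝ) * (A 2 2).re + (1:ℝ) * (C 0 0).re + (-14:ℝ) * (C 1 1).re + (-35:ℝ) * (C 2 2).re),
      sq_nonneg ((6:ℝ) * (A 0 1).re + (2:ℝ) * (A 1 2).re + (-2:ℝ) * (C 0 1).re + (1:ℝ) * (C 1 2).re),
      sq_nonneg ((6:ℝ) * (A 0 1).im + (2:ℝ) * (A 1 2).im + (-2:ℝ) * (C 0 1).im + (1:ℝ) * (C 1 2).im),
      sq_nonneg ((8:ℝ) * (A 0 2).re + (-1:ℝ) * (C 0 2).re),
      sq_nonneg ((8:ℝ) * (A 0 2).im + (-1:ℝ) * (C 0 2).im),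
      sq_nonneg ((16:ℝ) * (A 1 2).re + (5:ℝ) * (C 0 1).re + (-7:ℝ) * (C 1 2).re),
      sq_nonneg ((16:ℝ) * (A 1 2).im + (5:ℝ) * (C 0 1).im + (-7:ℝ) * (C 1 2).im),
      sq_nonneg ((5:ℝ) * (C 0 0).re + (-6:ℝ) * (C 1 1).re + (1:ℝ) * (C 2 2).re),
      sq_nonneg ((1:ℝ) * (C 1 1).re + (-1:ℝ) * (C 2 2).re),
      sq_nonneg ((11:ℝ) * (C 0 1).re + (7:ℝ) * (C 1 2).re),
      sq_nonneg ((11:ℝ) * (C 0 1).im + (7:ℝ) * (C 1 2).im),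
      sq_nonneg ((1:ℝ) * (C 0 2).re),
      sq_nonneg ((1:ℝ) * (C 0 2).im),
      sq_nonneg ((1:ℝ) * (C 1 2).re),
      sq_nonneg ((1:ℝ) * (C 1 2).im),
      sq_nonneg ((6:ℝ) * (B 0 0).re + (-2:ℝ) * (B 1 1).re + (-1:ℝ) * (B 2 2).re),
      sq_nonneg ((6:ℝ) * (B 0 0).im + (-2:ℝ) * (B 1 1).im + (-1:ℝ) * (B 2 2).im),
      sq_nonneg ((8:ℝ) * (B 0 1).re + (1:ℝ) * (B 1 2).re),
      sq_nonneg ((8:ℝ) * (B 0 1).im + (1:ℝ) * (B 1 2).im),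
      sq_nonneg ((1:ℝ) * (B 0 2).re),
      sq_nonneg ((1:ℝ) * (B 0 2).im),
      sq_nonneg ((8:ℝ) * (B 1 0).re + (1:ℝ) * (B 2 1).re),
      sq_nonneg ((8:ℝ) * (B 1 0).im + (1:ℝ) * (B 2 1).im),
      sq_nonneg ((19:ℝ) * (B 1 1).re + (-7:ℝ) * (B 2 2).re),
      sq_nonneg ((19:ℝ) * (B 1 1).im + (-7:ℝ) * (B 2 2).im),
      sq_nonneg ((1:ℝ) * (B 1 2).re),
      sq_nonneg ((1:ℝ) * (B 1 2).im),
      sq_nonneg ((1:ℝ) * (B 2 0).re),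
      sq_nonneg ((1:ℝ) * (B 2 0).im),
      sq_nonneg ((1:ℝ) * (B 2 1).re),
      sq_nonneg ((1:ℝ) * (B 2 1).im),
      sq_nonneg ((1:ℝ) * (B 2 2).re),
      sq_nonneg ((1:ℝ) * (B 2 2).im)]

  · ring
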